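/- Any CI-net whose preference graph is acyclic is satisfiable. -/

import Mathlib

variable {O : Type*} [Fintype O] [DecidableEq O]

/-- A strict partial order: irreflexive, asymmetric, transitive. -/
def IsPrefRel {α : Type*} (r : α → α → Prop) : Prop :=
  (∀ a, ¬ r a a) ∧ (∀ a b, r a b → ¬ r b a) ∧ (∀ a b c, r a b → r b c → r a c)

/-- Monotonicity on subsets of `O`: a strict superset is strictly preferred. -/
def Monotonic (r : Finset O → Finset O → Prop) : Prop :=
  ∀ a b : Finset O, b ⊂ a → r a b

/-- A CI-statement `S⁺, S⁻ : S₁ ▷ S₂` on `O`. -/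
structure CIStmt (O : Type*) [DecidableEq O] where
  sp : Finset O
  sm : Finset O
  s1 : Finset O
  s2 : Finset O
  h1 : s1.Nonempty
  h2 : s2.Nonempty
  dpm : Disjoint sp sm
  dp1 : Disjoint sp s1
  dp2 : Disjoint sp s2
  dm1 : Disjoint sm s1
  dm2 : Disjoint sm s2
  d12 : Disjoint s1 s2

/-- `r` satisfies a CI-statement. -/
def SatStmt (r : Finset O → Finset O → Prop) (c : CIStmt O) : Prop :=
  ∀ S' : Finset O, S' ⊆ Finset.univ \ (c.sp ∪ c.sm ∪ c.s1 ∪ c.s2) →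
    r (S' ∪ c.sp ∪ c.s1) (S' ∪ c.sp ∪ c.s2)

/-- `r` satisfies a CI-net: monotone and satisfies each statement. -/
def SatNet (r : Finset O → Finset O → Prop) (N : Set (CIStmt O)) : Prop :=
  Monotonic r ∧ ∀ c ∈ N, SatStmt r c

/-- A CI-net is satisfiable. -/
def CISatisfiable (N : Set (CIStmt O)) : Prop :=
  ∃ r : Finset O → Finset O → Prop, IsPrefRel r ∧ SatNet r N

/-- CI-flip with respect to `N`. -/
def CIFlip (N : Set (CIStmt O)) (a b : Finset O) : Prop :=
  ∃ c ∈ N, ∃ S' ⊆ Finset.univ \ (c.sp ∪ c.sm ∪ c.s1 ∪ c.s2),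
    a = S' ∪ c.sp ∪ c.s1 ∧ b = S' ∪ c.sp ∪ c.s2

/-- Worsening flip: a `⊃`-flip or a CI-flip. -/
def WFlip (N : Set (CIStmt O)) (a b : Finset O) : Prop :=
  b ⊂ a ∨ CIFlip N a b

/-- The intersection of all preference relations satisfying `N`. -/
def Induced (N : Set (CIStmt O)) (a b : Finset O) : Prop :=
  ∀ r : Finset O → Finset O → Prop, IsPrefRel r ∧ SatNet r N → r a b

/-- The preference graph of a CI-net: an edge from `o₁` to `o₂` whenever some
statement has `o₁ ∈ S₁` and `o₂ ∈ S₂`. -/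
def PrefEdge (N : Set (CIStmt O)) (o1 o2 : O) : Prop :=
  ∃ c ∈ N, o1 ∈ c.s1 ∧ o2 ∈ c.s2

/-- any CI-net whose preference graph is acyclic is satisfiable. -/
theorem stmt_5 (N : Set (CIStmt O))
    (h : ¬ ∃ o : O, Relation.TransGen (PrefEdge N) o o) :
    CISatisfiable N := by
  classical
  set n := Fintype.card O with hn
  have hirr : ∀ o, ¬ Relation.TransGen (PrefEdge N) o o := fun o ho => h ⟨o, ho⟩
  set f : O → ℕ := fun o =>
    (Finset.univ.filter (fun o' => Relation.TransGen (PrefEdge N) o o')).card with hfdef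
  have hfstep : ∀ o1 o2, PrefEdge N o1 o2 → f o2 < f o1 := by
    intro o1 o2 he
    apply Finset.card_lt_card
    constructor
    · intro x hx
      simp only [Finset.mem_filter, Finset.mem_univ, true_and] at *
      exact (Relation.TransGen.single he).trans hx
    · intro hsub
      have h2 : o2 ∈ Finset.univ.filter (fun o' => Relation.TransGen (PrefEdge N) o2 o') :=
        hsub (by simp [Relation.TransGen.single he])
      simp only [Finset.mem_filter, Finset.mem_univ, true_and] at h2
      exact hirr o2 h2
  set w : O → ℕ := fun o => (n+1) ^ (f o) with hwdef
  have hwpos : ∀ o, 0 < w o := fun o => Nat.pow_pos (Nat.succ_pos n)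
  set W : Finset O → ℕ := fun s => s.sum w with hWdef
  have hmono : ∀ a b : Finset O, b ⊂ a → W b < W a := by
    intro a b hba
    obtain ⟨i, hia, hib⟩ := Finset.exists_of_ssubset hba
    exact Finset.sum_lt_sum_of_subset hba.subset hia hib (hwpos i)
      (fun j _ _ => Nat.zero_le _)
  have hkey : ∀ c ∈ N, W c.s2 < W c.s1 := by
    intro c hc
    obtain ⟨o1, ho1⟩ := c.h1
    obtain ⟨o2, ho2⟩ := c.h2
    have hedge : ∀ o ∈ c.s2, f o < f o1 := fun o ho =>
      hfstep o1 o ⟨c, hc, ho1, ho⟩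
    have hf1 : 1 ≤ f o1 := Nat.one_le_iff_ne_zero.mpr (by
      intro h0
      exact Nat.not_lt_zero _ (h0 ▸ hedge o2 ho2))
    have hsum : W c.s2 ≤ c.s2.card * (n+1) ^ (f o1 - 1) := by
      calc W c.s2 ≤ c.s2.sum (fun _ => (n+1) ^ (f o1 - 1)) := by
            apply Finset.sum_le_sum
            intro o ho
            exact Nat.pow_le_pow_right (Nat.succ_pos n)
              (Nat.le_sub_one_of_lt (hedge o ho))
        _ = c.s2.card * (n+1) ^ (f o1 - 1) := by
            rw [Finset.sum_const, smul_eq_mul]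
    have hcard : c.s2.card ≤ n := by
      rw [hn]; exact Finset.card_le_univ c.s2 |>.trans (le_of_eq Finset.card_univ)
    have hlt : W c.s2 < w o1 := by
      calc W c.s2 ≤ c.s2.card * (n+1) ^ (f o1 - 1) := hsum
        _ ≤ n * (n+1) ^ (f o1 - 1) := Nat.mul_le_mul_right _ hcard
        _ < (n+1) * (n+1) ^ (f o1 - 1) :=
            (Nat.mul_lt_mul_right (Nat.pow_pos (Nat.succ_pos n))).mpr (Nat.lt_succ_self n)
        _ = (n+1) ^ (f o1 - 1 + 1) := by rw [pow_succ]; ring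
        _ = (n+1) ^ (f o1) := by rw [Nat.sub_add_cancel hf1]
    exact hlt.trans_le (Finset.single_le_sum (fun j _ => Nat.zero_le _) ho1)
  refine ⟨fun a b => W b < W a, ⟨fun a => lt_irrefl _, fun a b hab hba => absurd hab (not_lt_of_gt hba),
    fun a b c hab hbc => lt_trans hbc hab⟩, hmono, ?_⟩
  intro c hc S' hS'
  have hdisj : ∀ t : Finset O, t ⊆ c.sp ∪ c.sm ∪ c.s1 ∪ c.s2 → Disjoint S' t := by
    intro t ht
    refine Finset.disjoint_left.mpr (fun x hx hxt => ?_)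
    have := hS' hx
    rw [Finset.mem_sdiff] at this
    exact this.2 (ht hxt)
  have dp : Disjoint S' c.sp := hdisj _ (by intro x hx; simp [hx])
  have d1 : Disjoint S' c.s1 := hdisj _ (by intro x hx; simp [hx])
  have d2 : Disjoint S' c.s2 := hdisj _ (by intro x hx; simp [hx])
  show W (S' ∪ c.sp ∪ c.s2) < W (S' ∪ c.sp ∪ c.s1)
  have e1 : W (S' ∪ c.sp ∪ c.s1) = W S' + W c.sp + W c.s1 := by
    simp only [hWdef]
    rw [Finset.sum_union (Finset.disjoint_union_left.mpr ⟨d1, c.dp1⟩),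
        Finset.sum_union dp]
  have e2 : W (S' ∪ c.sp ∪ c.s2) = W S' + W c.sp + W c.s2 := by
    simp only [hWdef]
    rw [Finset.sum_union (Finset.disjoint_union_left.mpr ⟨d2, c.dp2⟩),
        Finset.sum_union dp]
  rw [e1, e2]
  exact Nat.add_lt_add_left (hkey c hc) _
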